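/- Suppose w₀ ∈ ℝ and θ ∈ ℝ satisfy the critical-point equations: ε σ_ε² w₀ + Rθ/(v_- + ε w₀) − p_- = 0 and −(σ_ε R/(γ−1))(θ − θ_-) + ε² (σ_ε³/2) w₀² − ε σ_ε p_- w₀ = 0, where σ_ε² = γ p_- /(v_- + ((γ+1)/2)ε), p_- = Rθ_- /v_-, ε ≠ 0, σ_ε ≠ 0, and v_- + ε w₀ > 0. Then w₀ = 0 or w₀ = 1. -/
import Mathlib


theorem critical_points_are_zero_or_one
    (R γ vm θm pm ε σ w₀ θ : ℝ)
    (hR : 0 < R) (hγ : 1 < γ) (hv : 0 < vm) (hθm : 0 < θm)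
    (hpm : pm = R * θm / vm)
    (hε : ε ≠ 0) (hσ : σ ≠ 0)
    (hσε : σ ^ 2 = γ * pm / (vm + (γ + 1) / 2 * ε))
    (hpos : 0 < vm + ε * w₀)
    (heq1 : ε * σ ^ 2 * w₀ + R * θ / (vm + ε * w₀) - pm = 0)
    (heq2 : -(σ * R / (γ - 1)) * (θ - θm) + ε ^ 2 * (σ ^ 3 / 2) * w₀ ^ 2
        - ε * σ * pm * w₀ = 0) :
    w₀ = 0 ∨ w₀ = 1 := by
  have hvne : vm + ε * w₀ ≠ 0 := ne_of_gt hpos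
  have hvm : vm ≠ 0 := ne_of_gt hv
  have hγ1 : γ - 1 ≠ 0 := by intro h; nlinarith
  have hpm' : pm * vm = R * θm := by rw [hpm]; field_simp
  have hD : vm + (γ + 1) / 2 * ε ≠ 0 := by
    intro h
    apply hσ
    have h2 : σ ^ 2 = 0 := by rw [hσε, h, div_zero]
    exact pow_eq_zero_iff (two_ne_zero) |>.mp h2
  have hC : σ ^ 2 * (vm + (γ + 1) / 2 * ε) = γ * pm := by
    rw [hσε, div_mul_cancel₀ _ hD]
  have hA : ε * σ ^ 2 * w₀ * (vm + ε * w₀) + R * θ - pm * (vm + ε * w₀) = 0 := by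
    have := heq1
    field_simp at this
    linarith
  have hB : -(R / (γ - 1)) * (θ - θm) + ε ^ 2 * (σ ^ 2 / 2) * w₀ ^ 2
      - ε * pm * w₀ = 0 := by
    have h2 : σ * (-(R / (γ - 1)) * (θ - θm) + ε ^ 2 * (σ ^ 2 / 2) * w₀ ^ 2
        - ε * pm * w₀) = 0 := by linear_combination heq2
    rcases mul_eq_zero.mp h2 with h | h
    · exact absurd h hσ
    · exact h
  have hB' : -R * (θ - θm) + (γ - 1) * (ε ^ 2 * (σ ^ 2 / 2) * w₀ ^ 2
      - ε * pm * w₀) = 0 := by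
    have := hB
    field_simp at this
    linarith [this]
  have key : (γ + 1) / 2 * ε ^ 2 * σ ^ 2 * (w₀ ^ 2 - w₀) = 0 := by
    linear_combination hA + hB' - ε * w₀ * hC + hpm'
  have hne : (γ + 1) / 2 * ε ^ 2 * σ ^ 2 ≠ 0 := by
    apply mul_ne_zero (mul_ne_zero _ (pow_ne_zero 2 hε)) (pow_ne_zero 2 hσ)
    positivity
  have hw : w₀ ^ 2 - w₀ = 0 := by
    rcases mul_eq_zero.mp key with h | h
    · exact absurd h hne
    · exact h
  rcases mul_eq_zero.mp (show w₀ * (w₀ - 1) = 0 by nlinarith [hw]) with h | h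
  · exact Or.inl h
  · exact Or.inr (by linarith)
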